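/- Let P = {x ∈ [0,3]² : 0 ≤ x₂ − x₁ ≤ 1/2} with I = {1,2}, and let B = conv({(0,(0,0)), (1,(1,0)), (2,(1,1)), (3,(0,1))}) ∈ Γ²₃, which is a non-affine binarization polytope. Let ℬ = (B,B), so P_ℬ = {(x,z₁,z₂) ∈ ℝ² × ℝ² × ℝ² : x ∈ P, (x_i,z_i) ∈ B for i = 1,2}, and let I′ = {3,4,5,6} index the four binarization variables. Then SC(P,I) ⊊ proj_x(SC(P_ℬ, I′)); in particular SC(P,I) = {x ∈ [0,3]² : x₁ = x₂}, and the point (1, 3/2) lies in proj_x(SC(P_ℬ, I′)) but not in SC(P,I). -/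
import Mathlib

open Set

private lemma int_gap (m c : ℤ) {x : ℝ} (hx : x = (m:ℝ)) (h1 : (c:ℝ) < x)
    (h2 : x < (c:ℝ)+1) : False := by
  subst hx
  have h1' : c < m := by exact_mod_cast h1
  have h2' : m < c + 1 := by exact_mod_cast (by push_cast; linarith : (m:ℝ) < ((c+1:ℤ):ℝ))
  omega

private lemma comb_mem {E : Type*} [AddCommGroup E] [Module ℝ E] {s : Set E} {x y : E}
    (hx : x ∈ s) (hy : y ∈ s) {a b : ℝ} (ha : 0 ≤ a) (hb : 0 ≤ b) (hab : a + b = 1) :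
    a • x + b • y ∈ convexHull ℝ s :=
  (convex_convexHull ℝ s) (subset_convexHull ℝ s hx) (subset_convexHull ℝ s hy) ha hb hab

noncomputable def splitClosure {E : Type*} [AddCommGroup E] [Module ℝ E]
    (Λ : Set (E → ℝ)) (P : Set E) : Set E :=
  ⋂ f ∈ Λ, ⋂ c : ℤ, convexHull ℝ (P \ {x | (c : ℝ) < f x ∧ f x < c + 1})

def splitsXY : Set ((ℝ × ℝ) → ℝ) :=
  {f | ∃ π₁ π₂ : ℤ, f = fun x => (π₁ : ℝ) * x.1 + (π₂ : ℝ) * x.2}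

def splitsZ : Set (((ℝ × ℝ) × ((ℝ × ℝ) × (ℝ × ℝ))) → ℝ) :=
  {f | ∃ c₁₁ c₁₂ c₂₁ c₂₂ : ℤ, f = fun p =>
    (c₁₁ : ℝ) * p.2.1.1 + (c₁₂ : ℝ) * p.2.1.2 + (c₂₁ : ℝ) * p.2.2.1 + (c₂₂ : ℝ) * p.2.2.2}

def IsBinPair (u : ℕ) (B : Set (ℝ × (ℝ × ℝ))) : Prop :=
  (∀ p ∈ B, 0 ≤ p.1 ∧ p.1 ≤ (u : ℝ) ∧ 0 ≤ p.2.1 ∧ p.2.1 ≤ 1 ∧ 0 ≤ p.2.2 ∧ p.2.2 ≤ 1) ∧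
  Prod.fst '' (B ∩ {p | (p.2.1 = 0 ∨ p.2.1 = 1) ∧ (p.2.2 = 0 ∨ p.2.2 = 1)}) =
    {x : ℝ | ∃ k : ℕ, k ≤ u ∧ x = (k : ℝ)}

theorem stmt9 (P : Set (ℝ × ℝ))
    (hP : P = {x | 0 ≤ x.1 ∧ x.1 ≤ 3 ∧ 0 ≤ x.2 ∧ x.2 ≤ 3 ∧
      0 ≤ x.2 - x.1 ∧ x.2 - x.1 ≤ 1 / 2})
    (B : Set (ℝ × (ℝ × ℝ)))
    (hB : B = convexHull ℝ
      {((0 : ℝ), ((0 : ℝ), (0 : ℝ))), (1, (1, 0)), (2, (1, 1)), (3, (0, 1))})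
    (PB : Set ((ℝ × ℝ) × ((ℝ × ℝ) × (ℝ × ℝ))))
    (hPB : PB = {p | p.1 ∈ P ∧ (p.1.1, p.2.1) ∈ B ∧ (p.1.2, p.2.2) ∈ B}) :
    IsBinPair 3 B ∧
    (¬ ∃ α₁ α₂ α₀ : ℝ, ∀ p ∈ B, p.1 = α₁ * p.2.1 + α₂ * p.2.2 + α₀) ∧
    splitClosure splitsXY P = {x : ℝ × ℝ | 0 ≤ x.1 ∧ x.1 ≤ 3 ∧ x.1 = x.2} ∧
    splitClosure splitsXY P ⊂ Prod.fst '' splitClosure splitsZ PB ∧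
    ((1 : ℝ), (3 / 2 : ℝ)) ∈ Prod.fst '' splitClosure splitsZ PB ∧
    ((1 : ℝ), (3 / 2 : ℝ)) ∉ splitClosure splitsXY P := by
  -- vertices of B
  have hv0 : ((0:ℝ),((0:ℝ),(0:ℝ))) ∈ B := hB ▸ subset_convexHull ℝ _ (by simp)
  have hv1 : ((1:ℝ),((1:ℝ),(0:ℝ))) ∈ B := hB ▸ subset_convexHull ℝ _ (by simp)
  have hv2 : ((2:ℝ),((1:ℝ),(1:ℝ))) ∈ B := hB ▸ subset_convexHull ℝ _ (by simp)
  have hv3 : ((3:ℝ),((0:ℝ),(1:ℝ))) ∈ B := hB ▸ subset_convexHull ℝ _ (by simp)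
  have hconvB : Convex ℝ B := hB ▸ convex_convexHull ℝ _
  have hmid : ∀ x y : ℝ × (ℝ × ℝ), x ∈ B → y ∈ B → (1/2:ℝ)•x + (1/2:ℝ)•y ∈ B := by
    intro x y hx hy
    exact hconvB hx hy (by norm_num) (by norm_num) (by norm_num)
  -- extra points of B
  have hb1 : ((1:ℝ),((1/2:ℝ),(1/2:ℝ))) ∈ B := by
    have := hmid _ _ hv0 hv2; rw [show ((1:ℝ),((1/2:ℝ),(1/2:ℝ)))
      = (1/2:ℝ)•((0:ℝ),((0:ℝ),(0:ℝ))) + (1/2:ℝ)•((2:ℝ),((1:ℝ),(1:ℝ))) by norm_num [Prod.ext_iff]]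
    exact this
  have hb2 : ((2:ℝ),((1/2:ℝ),(1/2:ℝ))) ∈ B := by
    have := hmid _ _ hv1 hv3; rw [show ((2:ℝ),((1/2:ℝ),(1/2:ℝ)))
      = (1/2:ℝ)•((1:ℝ),((1:ℝ),(0:ℝ))) + (1/2:ℝ)•((3:ℝ),((0:ℝ),(1:ℝ))) by norm_num [Prod.ext_iff]]
    exact this
  have hb32 : ((3/2:ℝ),((1/2:ℝ),(1/2:ℝ))) ∈ B := by
    have := hmid _ _ hb1 hb2; rw [show ((3/2:ℝ),((1/2:ℝ),(1/2:ℝ)))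
      = (1/2:ℝ)•((1:ℝ),((1/2:ℝ),(1/2:ℝ))) + (1/2:ℝ)•((2:ℝ),((1/2:ℝ),(1/2:ℝ))) by norm_num [Prod.ext_iff]]
    exact this
  have hb01 : ((3/2:ℝ),((0:ℝ),(1/2:ℝ))) ∈ B := by
    have := hmid _ _ hv0 hv3; rw [show ((3/2:ℝ),((0:ℝ),(1/2:ℝ)))
      = (1/2:ℝ)•((0:ℝ),((0:ℝ),(0:ℝ))) + (1/2:ℝ)•((3:ℝ),((0:ℝ),(1:ℝ))) by norm_num [Prod.ext_iff]]
    exact this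
  have hb11 : ((3/2:ℝ),((1:ℝ),(1/2:ℝ))) ∈ B := by
    have := hmid _ _ hv1 hv2; rw [show ((3/2:ℝ),((1:ℝ),(1/2:ℝ)))
      = (1/2:ℝ)•((1:ℝ),((1:ℝ),(0:ℝ))) + (1/2:ℝ)•((2:ℝ),((1:ℝ),(1:ℝ))) by norm_num [Prod.ext_iff]]
    exact this
  have hb12 : ((1/2:ℝ),((1/2:ℝ),(0:ℝ))) ∈ B := by
    have := hmid _ _ hv0 hv1; rw [show ((1/2:ℝ),((1/2:ℝ),(0:ℝ)))
      = (1/2:ℝ)•((0:ℝ),((0:ℝ),(0:ℝ))) + (1/2:ℝ)•((1:ℝ),((1:ℝ),(0:ℝ))) by norm_num [Prod.ext_iff]]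
    exact this
  have hb52 : ((5/2:ℝ),((1/2:ℝ),(1:ℝ))) ∈ B := by
    have := hmid _ _ hv2 hv3; rw [show ((5/2:ℝ),((1/2:ℝ),(1:ℝ)))
      = (1/2:ℝ)•((2:ℝ),((1:ℝ),(1:ℝ))) + (1/2:ℝ)•((3:ℝ),((0:ℝ),(1:ℝ))) by norm_num [Prod.ext_iff]]
    exact this
  -- H-representation (outer bound)
  have hBH : ∀ p ∈ B, p.2.1 + p.2.2 ≤ p.1 ∧ p.1 ≤ p.2.1 + 3*p.2.2 ∧
      3*p.2.2 ≤ p.1 + p.2.1 ∧ p.1 + p.2.1 - p.2.2 ≤ 2 := by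
    rw [hB]
    intro p hp
    have key : p ∈ {q : ℝ × (ℝ × ℝ) | q.2.1 + q.2.2 ≤ q.1 ∧ q.1 ≤ q.2.1 + 3*q.2.2 ∧
        3*q.2.2 ≤ q.1 + q.2.1 ∧ q.1 + q.2.1 - q.2.2 ≤ 2} := by
      refine convexHull_min ?_ ?_ hp
      · rintro q hq
        simp only [mem_insert_iff, mem_singleton_iff] at hq
        rcases hq with rfl|rfl|rfl|rfl <;> norm_num
      · intro x hx y hy a b ha hb hab
        simp only [mem_setOf_eq, Prod.fst_add, Prod.snd_add, Prod.smul_fst, Prod.smul_snd,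
          smul_eq_mul] at *
        obtain ⟨x1,x2,x3,x4⟩ := hx
        obtain ⟨y1,y2,y3,y4⟩ := hy
        refine ⟨?_, ?_, ?_, ?_⟩ <;>
          nlinarith [mul_le_mul_of_nonneg_left x1 ha, mul_le_mul_of_nonneg_left y1 hb,
            mul_le_mul_of_nonneg_left x2 ha, mul_le_mul_of_nonneg_left y2 hb,
            mul_le_mul_of_nonneg_left x3 ha, mul_le_mul_of_nonneg_left y3 hb,
            mul_le_mul_of_nonneg_left x4 ha, mul_le_mul_of_nonneg_left y4 hb]
    exact key
  -- Part 1
  have part1 : IsBinPair 3 B := by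
    constructor
    · intro p hp
      obtain ⟨C1, C2, C3, C4⟩ := hBH p hp
      push_cast
      refine ⟨by linarith, by linarith, by linarith, by linarith, by linarith, by linarith⟩
    · ext x
      simp only [mem_image, mem_inter_iff, mem_setOf_eq]
      constructor
      · rintro ⟨p, ⟨hpB, hz1, hz2⟩, rfl⟩
        obtain ⟨C1, C2, C3, C4⟩ := hBH p hpB
        rcases hz1 with h1|h1 <;> rcases hz2 with h2|h2
        · exact ⟨0, by norm_num, by rw [h1, h2] at C1 C2; push_cast; linarith⟩
        · exact ⟨3, by norm_num, by rw [h1, h2] at C1 C3; push_cast; linarith⟩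
        · exact ⟨1, by norm_num, by rw [h1, h2] at C1 C2; push_cast; linarith⟩
        · exact ⟨2, by norm_num, by rw [h1, h2] at C1 C4; push_cast; linarith⟩
      · rintro ⟨k, hk, rfl⟩
        interval_cases k
        · exact ⟨((0:ℝ),((0:ℝ),(0:ℝ))), ⟨hv0, by norm_num⟩, by norm_num⟩
        · exact ⟨((1:ℝ),((1:ℝ),(0:ℝ))), ⟨hv1, by norm_num⟩, by norm_num⟩
        · exact ⟨((2:ℝ),((1:ℝ),(1:ℝ))), ⟨hv2, by norm_num⟩, by norm_num⟩
        · exact ⟨((3:ℝ),((0:ℝ),(1:ℝ))), ⟨hv3, by norm_num⟩, by norm_num⟩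
  -- Part 2
  have part2 : ¬ ∃ α₁ α₂ α₀ : ℝ, ∀ p ∈ B, p.1 = α₁ * p.2.1 + α₂ * p.2.2 + α₀ := by
    rintro ⟨α₁, α₂, α₀, h⟩
    have e0 := h _ hv0
    have e1 := h _ hv1
    have e2 := h _ hv2
    have e3 := h _ hv3
    norm_num at e0 e1 e2 e3
    linarith
  -- Part 3
  have hDconv : Convex ℝ {x : ℝ × ℝ | 0 ≤ x.1 ∧ x.1 ≤ 3 ∧ x.1 = x.2} := by
    intro x hx y hy a b ha hb hab
    simp only [mem_setOf_eq, Prod.fst_add, Prod.snd_add, Prod.smul_fst, Prod.smul_snd,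
      smul_eq_mul] at *
    obtain ⟨x1, x2, x3⟩ := hx
    obtain ⟨y1, y2, y3⟩ := hy
    refine ⟨by nlinarith, by nlinarith, by rw [x3, y3]⟩
  have part3 : splitClosure splitsXY P = {x : ℝ × ℝ | 0 ≤ x.1 ∧ x.1 ≤ 3 ∧ x.1 = x.2} := by
    apply Subset.antisymm
    · intro x hx
      simp only [splitClosure, mem_iInter] at hx
      have h := hx (fun y => ((-1 : ℤ) : ℝ) * y.1 + ((1 : ℤ) : ℝ) * y.2) ⟨-1, 1, rfl⟩ 0
      have hset : P \ {y : ℝ × ℝ | ((0:ℤ):ℝ) < ((-1:ℤ):ℝ) * y.1 + ((1:ℤ):ℝ) * y.2 ∧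
          ((-1:ℤ):ℝ) * y.1 + ((1:ℤ):ℝ) * y.2 < ((0:ℤ):ℝ) + 1}
          = {x : ℝ × ℝ | 0 ≤ x.1 ∧ x.1 ≤ 3 ∧ x.1 = x.2} := by
        ext y
        simp only [hP, mem_diff, mem_setOf_eq, not_and, not_lt]
        push_cast
        constructor
        · rintro ⟨⟨h1, h2, h3, h4, h5, h6⟩, h7⟩
          refine ⟨h1, h2, ?_⟩
          rcases le_or_gt (-1 * y.1 + 1 * y.2) 0 with hle | hlt
          · linarith
          · have := h7 hlt; linarith
        · rintro ⟨h1, h2, h3⟩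
          exact ⟨⟨h1, h2, by linarith, by linarith, by linarith, by linarith⟩,
            fun hlt => by linarith⟩
      rw [hset] at h
      rwa [hDconv.convexHull_eq] at h
    · rintro x ⟨h1, h2, h3⟩
      simp only [splitClosure, mem_iInter]
      rintro f ⟨pi1, pi2, rfl⟩ c
      have h0 : ((0:ℝ),(0:ℝ)) ∈ P \ {y : ℝ × ℝ | (c:ℝ) < (pi1:ℝ) * y.1 + (pi2:ℝ) * y.2 ∧
          (pi1:ℝ) * y.1 + (pi2:ℝ) * y.2 < (c:ℝ) + 1} := by
        refine mem_diff_of_mem (by norm_num [hP]) ?_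
        rintro ⟨hh1, hh2⟩
        exact int_gap 0 c (by push_cast; ring) hh1 hh2
      have h3pt : ((3:ℝ),(3:ℝ)) ∈ P \ {y : ℝ × ℝ | (c:ℝ) < (pi1:ℝ) * y.1 + (pi2:ℝ) * y.2 ∧
          (pi1:ℝ) * y.1 + (pi2:ℝ) * y.2 < (c:ℝ) + 1} := by
        refine mem_diff_of_mem (by norm_num [hP]) ?_
        rintro ⟨hh1, hh2⟩
        exact int_gap (3 * pi1 + 3 * pi2) c (by push_cast; ring) hh1 hh2
      have hxeq : x = (1 - x.1 / 3) • ((0:ℝ),(0:ℝ)) + (x.1 / 3) • ((3:ℝ),(3:ℝ)) := by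
        rw [Prod.ext_iff]
        constructor <;>
          simp only [Prod.fst_add, Prod.snd_add, Prod.smul_fst, Prod.smul_snd, smul_eq_mul] <;>
          [skip; rw [← h3]] <;> ring
      rw [hxeq]
      exact comb_mem h0 h3pt (by linarith) (by linarith) (by ring)
  -- Part 5 : the lifted point
  have hq : (((1:ℝ),(3/2:ℝ)), (((1/2:ℝ),(1/2:ℝ)), ((1/2:ℝ),(1/2:ℝ)))) ∈ splitClosure splitsZ PB := by
    simp only [splitClosure, mem_iInter]
    rintro f ⟨c11, c12, c21, c22, rfl⟩ c0
    have hqPB : (((1:ℝ),(3/2:ℝ)), (((1/2:ℝ),(1/2:ℝ)), ((1/2:ℝ),(1/2:ℝ)))) ∈ PB := by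
      rw [hPB]
      exact ⟨by norm_num [hP], hb1, hb32⟩
    by_cases hodd : c11 + c12 + c21 + c22 = 2 * c0 + 1
    case neg =>
      refine subset_convexHull ℝ _ ⟨hqPB, ?_⟩
      rintro ⟨hh1, hh2⟩
      simp only at hh1 hh2
      apply hodd
      have l1 : 2 * c0 < c11 + c12 + c21 + c22 := by
        exact_mod_cast (by push_cast; linarith :
          ((2 * c0 : ℤ):ℝ) < ((c11 + c12 + c21 + c22 : ℤ):ℝ))
      have l2 : c11 + c12 + c21 + c22 < 2 * c0 + 2 := by
        exact_mod_cast (by push_cast; linarith :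
          ((c11 + c12 + c21 + c22 : ℤ):ℝ) < ((2 * c0 + 2 : ℤ):ℝ))
      omega
    case pos =>
      have hSR : (c11:ℝ) + (c12:ℝ) + (c21:ℝ) + (c22:ℝ) = 2 * (c0:ℝ) + 1 := by
        exact_mod_cast hodd
      by_cases h21 : c21 = 0
      · -- segment 1 : from ((0,1/2),((0,0),(1/2,0))) to ((2,5/2),((1,1),(1/2,1)))
        subst h21
        have haPB : (((0:ℝ),(1/2:ℝ)), (((0:ℝ),(0:ℝ)), ((1/2:ℝ),(0:ℝ)))) ∈ PB := by
          rw [hPB]; exact ⟨by norm_num [hP], hv0, hb12⟩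
        have hbPB : (((2:ℝ),(5/2:ℝ)), (((1:ℝ),(1:ℝ)), ((1/2:ℝ),(1:ℝ)))) ∈ PB := by
          rw [hPB]; exact ⟨by norm_num [hP], hv2, hb52⟩
        have hqeq : (((1:ℝ),(3/2:ℝ)), (((1/2:ℝ),(1/2:ℝ)), ((1/2:ℝ),(1/2:ℝ))))
            = (1/2:ℝ) • (((0:ℝ),(1/2:ℝ)), (((0:ℝ),(0:ℝ)), ((1/2:ℝ),(0:ℝ))))
            + (1/2:ℝ) • (((2:ℝ),(5/2:ℝ)), (((1:ℝ),(1:ℝ)), ((1/2:ℝ),(1:ℝ)))) := by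
          norm_num [Prod.ext_iff]
        rw [hqeq]
        refine comb_mem (mem_diff_of_mem haPB ?_) (mem_diff_of_mem hbPB ?_) (by norm_num) (by norm_num) (by norm_num)
        · rintro ⟨hh1, hh2⟩
          simp only at hh1 hh2
          exact int_gap 0 c0 (by push_cast; ring) hh1 hh2
        · rintro ⟨hh1, hh2⟩
          simp only at hh1 hh2
          exact int_gap (2 * c0 + 1) c0 (by push_cast at hSR ⊢; linarith) hh1 hh2
      · -- segment 2 : vary z₂₁
        have haPB : (((1:ℝ),(3/2:ℝ)), (((1/2:ℝ),(1/2:ℝ)), ((0:ℝ),(1/2:ℝ)))) ∈ PB := by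
          rw [hPB]; exact ⟨by norm_num [hP], hb1, hb01⟩
        have hbPB : (((1:ℝ),(3/2:ℝ)), (((1/2:ℝ),(1/2:ℝ)), ((1:ℝ),(1/2:ℝ)))) ∈ PB := by
          rw [hPB]; exact ⟨by norm_num [hP], hb1, hb11⟩
        have hqeq : (((1:ℝ),(3/2:ℝ)), (((1/2:ℝ),(1/2:ℝ)), ((1/2:ℝ),(1/2:ℝ))))
            = (1/2:ℝ) • (((1:ℝ),(3/2:ℝ)), (((1/2:ℝ),(1/2:ℝ)), ((0:ℝ),(1/2:ℝ))))
            + (1/2:ℝ) • (((1:ℝ),(3/2:ℝ)), (((1/2:ℝ),(1/2:ℝ)), ((1:ℝ),(1/2:ℝ)))) := by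
          norm_num [Prod.ext_iff]
        rw [hqeq]
        refine comb_mem (mem_diff_of_mem haPB ?_) (mem_diff_of_mem hbPB ?_) (by norm_num) (by norm_num) (by norm_num)
        · rintro ⟨hh1, hh2⟩
          simp only at hh1 hh2
          have l1 : ((-1:ℤ):ℝ) < (c21:ℝ) := by push_cast; linarith
          have l2 : (c21:ℝ) < ((1:ℤ):ℝ) := by push_cast; linarith
          have l1' : (-1:ℤ) < c21 := by exact_mod_cast l1
          have l2' : c21 < (1:ℤ) := by exact_mod_cast l2
          omega
        · rintro ⟨hh1, hh2⟩
          simp only at hh1 hh2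
          have l1 : ((-1:ℤ):ℝ) < (c21:ℝ) := by push_cast; linarith
          have l2 : (c21:ℝ) < ((1:ℤ):ℝ) := by push_cast; linarith
          have l1' : (-1:ℤ) < c21 := by exact_mod_cast l1
          have l2' : c21 < (1:ℤ) := by exact_mod_cast l2
          omega
  have part5 : ((1:ℝ), (3/2:ℝ)) ∈ Prod.fst '' splitClosure splitsZ PB := ⟨_, hq, rfl⟩
  -- Part 4 : strict inclusion
  have hL0PB : (((0:ℝ),(0:ℝ)), (((0:ℝ),(0:ℝ)), ((0:ℝ),(0:ℝ)))) ∈ PB := by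
    rw [hPB]; exact ⟨by norm_num [hP], hv0, hv0⟩
  have hL1PB : (((1:ℝ),(1:ℝ)), (((1:ℝ),(0:ℝ)), ((1:ℝ),(0:ℝ)))) ∈ PB := by
    rw [hPB]; exact ⟨by norm_num [hP], hv1, hv1⟩
  have hL2PB : (((2:ℝ),(2:ℝ)), (((1:ℝ),(1:ℝ)), ((1:ℝ),(1:ℝ)))) ∈ PB := by
    rw [hPB]; exact ⟨by norm_num [hP], hv2, hv2⟩
  have hL3PB : (((3:ℝ),(3:ℝ)), (((0:ℝ),(1:ℝ)), ((0:ℝ),(1:ℝ)))) ∈ PB := by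
    rw [hPB]; exact ⟨by norm_num [hP], hv3, hv3⟩
  have hsub : {x : ℝ × ℝ | 0 ≤ x.1 ∧ x.1 ≤ 3 ∧ x.1 = x.2} ⊆
      Prod.fst '' splitClosure splitsZ PB := by
    rintro x ⟨h1, h2, h3⟩
    rcases le_or_gt x.1 1 with hc1 | hc1
    · refine ⟨(x, ((x.1, 0), (x.1, 0))), ?_, rfl⟩
      simp only [splitClosure, mem_iInter]
      rintro f ⟨c11, c12, c21, c22, rfl⟩ c
      have heq : (x, ((x.1, (0:ℝ)), (x.1, (0:ℝ))))
          = (1 - x.1) • (((0:ℝ),(0:ℝ)), (((0:ℝ),(0:ℝ)), ((0:ℝ),(0:ℝ))))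
          + x.1 • (((1:ℝ),(1:ℝ)), (((1:ℝ),(0:ℝ)), ((1:ℝ),(0:ℝ)))) := by
        simp only [Prod.ext_iff, Prod.fst_add, Prod.snd_add, Prod.smul_fst, Prod.smul_snd,
          smul_eq_mul]
        refine ⟨⟨by ring, by rw [← h3]; ring⟩, ⟨by ring, by ring⟩, by ring, by ring⟩
      rw [heq]
      refine comb_mem (mem_diff_of_mem hL0PB ?_) (mem_diff_of_mem hL1PB ?_) (by linarith) (by linarith) (by ring)
      · rintro ⟨hh1, hh2⟩
        simp only at hh1 hh2
        exact int_gap 0 c (by push_cast; ring) hh1 hh2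
      · rintro ⟨hh1, hh2⟩
        simp only at hh1 hh2
        exact int_gap (c11 + c21) c (by push_cast; ring) hh1 hh2
    · rcases le_or_gt x.1 2 with hc2 | hc2
      · refine ⟨(x, ((1, x.1 - 1), (1, x.1 - 1))), ?_, rfl⟩
        simp only [splitClosure, mem_iInter]
        rintro f ⟨c11, c12, c21, c22, rfl⟩ c
        have heq : (x, (((1:ℝ), x.1 - 1), ((1:ℝ), x.1 - 1)))
            = (2 - x.1) • (((1:ℝ),(1:ℝ)), (((1:ℝ),(0:ℝ)), ((1:ℝ),(0:ℝ))))
            + (x.1 - 1) • (((2:ℝ),(2:ℝ)), (((1:ℝ),(1:ℝ)), ((1:ℝ),(1:ℝ)))) := by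
          simp only [Prod.ext_iff, Prod.fst_add, Prod.snd_add, Prod.smul_fst, Prod.smul_snd,
            smul_eq_mul]
          refine ⟨⟨by ring, by rw [← h3]; ring⟩, ⟨by ring, by ring⟩, by ring, by ring⟩
        rw [heq]
        refine comb_mem (mem_diff_of_mem hL1PB ?_) (mem_diff_of_mem hL2PB ?_) (by linarith) (by linarith) (by ring)
        · rintro ⟨hh1, hh2⟩
          simp only at hh1 hh2
          exact int_gap (c11 + c21) c (by push_cast; ring) hh1 hh2
        · rintro ⟨hh1, hh2⟩
          simp only at hh1 hh2
          exact int_gap (c11 + c12 + c21 + c22) c (by push_cast; ring) hh1 hh2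
      · refine ⟨(x, ((3 - x.1, 1), (3 - x.1, 1))), ?_, rfl⟩
        simp only [splitClosure, mem_iInter]
        rintro f ⟨c11, c12, c21, c22, rfl⟩ c
        have heq : (x, ((3 - x.1, (1:ℝ)), (3 - x.1, (1:ℝ))))
            = (3 - x.1) • (((2:ℝ),(2:ℝ)), (((1:ℝ),(1:ℝ)), ((1:ℝ),(1:ℝ))))
            + (x.1 - 2) • (((3:ℝ),(3:ℝ)), (((0:ℝ),(1:ℝ)), ((0:ℝ),(1:ℝ)))) := by
          simp only [Prod.ext_iff, Prod.fst_add, Prod.snd_add, Prod.smul_fst, Prod.smul_snd,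
            smul_eq_mul]
          refine ⟨⟨by ring, by rw [← h3]; ring⟩, ⟨by ring, by ring⟩, by ring, by ring⟩
        rw [heq]
        refine comb_mem (mem_diff_of_mem hL2PB ?_) (mem_diff_of_mem hL3PB ?_) (by linarith) (by linarith) (by ring)
        · rintro ⟨hh1, hh2⟩
          simp only at hh1 hh2
          exact int_gap (c11 + c12 + c21 + c22) c (by push_cast; ring) hh1 hh2
        · rintro ⟨hh1, hh2⟩
          simp only at hh1 hh2
          exact int_gap (c12 + c22) c (by push_cast; ring) hh1 hh2
  have part4 : splitClosure splitsXY P ⊂ Prod.fst '' splitClosure splitsZ PB := by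
    rw [part3]
    exact (ssubset_iff_of_subset hsub).mpr ⟨_, part5, by norm_num [mem_setOf_eq]⟩
  have part6 : ((1:ℝ), (3/2:ℝ)) ∉ splitClosure splitsXY P := by
    rw [part3]; norm_num [mem_setOf_eq]
  exact ⟨part1, part2, part3, part4, part5, part6⟩
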